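/- For every finite graph X and every p ∈ X, there exists a continuum Y that is not a finite graph and a point y ∈ Y such that C(p,X) is homeomorphic to C(y,Y). -/

import Mathlib

open Set Topology TopologicalSpace unitInterval

universe u

/-- `IndDimLE n X` : small inductive dimension of `X` is at most `n - 1`. -/
def IndDimLE : ℕ → ∀ (X : Type u) [TopologicalSpace X], Prop
  | 0, X, _ => IsEmpty X
  | (n+1), X, _ => ∀ (x : X) (U : Set X), IsOpen U → x ∈ U →
      ∃ V : Set X, IsOpen V ∧ x ∈ V ∧ V ⊆ U ∧ IndDimLE n ↥(frontier V)

/-- `X` is finite-dimensional (inductive dimension). -/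
def FinDim (X : Type u) [TopologicalSpace X] : Prop := ∃ n : ℕ, IndDimLE n X

/-- `ord(x,X) ≤ β`. -/
def OrdLE {X : Type u} [TopologicalSpace X] (x : X) (β : Cardinal.{u}) : Prop :=
  ∀ U : Set X, IsOpen U → x ∈ U →
    ∃ V : Set X, IsOpen V ∧ x ∈ V ∧ V ⊆ U ∧ Cardinal.mk ↥(frontier V) ≤ β

def FiniteOrd {X : Type u} [TopologicalSpace X] (x : X) : Prop :=
  ∃ n : ℕ, OrdLE x (n : Cardinal.{u})

def EndPt {X : Type u} [TopologicalSpace X] (x : X) : Prop := OrdLE x 1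

def RamPt {X : Type u} [TopologicalSpace X] (x : X) : Prop := ¬ OrdLE x 2

noncomputable def ordNat {X : Type u} [TopologicalSpace X] (x : X) : ℕ :=
  sInf {n : ℕ | OrdLE x (n : Cardinal.{u})}

/-- `A` is an arc with endpoints `x` and `y`. -/
def IsArcWith {X : Type u} [TopologicalSpace X] (A : Set X) (x y : X) : Prop :=
  ∃ h : unitInterval ≃ₜ ↥A, (h 0 : X) = x ∧ (h 1 : X) = y

/-- `G` is a finite graph: a continuum which is a finite union of arcs any two of which
are disjoint or meet only in endpoints. -/
def IsFiniteGraph {X : Type u} [TopologicalSpace X] (G : Set X) : Prop :=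
  IsConnected G ∧ ∃ (n : ℕ) (A : Fin n → Set X) (e : Fin n → X × X),
    (∀ i, IsArcWith (A i) (e i).1 (e i).2) ∧ (⋃ i, A i) = G ∧
    ∀ i j, i ≠ j → A i ∩ A j ⊆ ({(e i).1, (e i).2} ∩ {(e j).1, (e j).2} : Set X)

def NoSimpleClosedCurve (X : Type u) [TopologicalSpace X] : Prop :=
  ∀ S : Set X, ¬ Nonempty (↥S ≃ₜ Circle)

def IsContinuumSp (X : Type u) [MetricSpace X] : Prop :=
  Nonempty X ∧ CompactSpace X ∧ ConnectedSpace X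

def IsDendriteSp (X : Type u) [MetricSpace X] : Prop :=
  IsContinuumSp X ∧ LocallyConnectedSpace X ∧ NoSimpleClosedCurve X

def IsFiniteGraphSp (X : Type u) [MetricSpace X] : Prop :=
  IsContinuumSp X ∧ IsFiniteGraph (Set.univ : Set X)

def IsTreeSp (X : Type u) [MetricSpace X] : Prop :=
  IsFiniteGraphSp X ∧ NoSimpleClosedCurve X

/-- The hyperspace `C(p,X)` of subcontinua of `X` containing `p`, with the Hausdorff metric. -/
abbrev Cp (X : Type u) [MetricSpace X] (p : X) : Type u :=
  {A : NonemptyCompacts X // IsConnected (A : Set X) ∧ p ∈ (A : Set X)}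

/-- The hyperspace `C(X)` of subcontinua of `X`, with the Hausdorff metric. -/
abbrev ContHyp (X : Type u) [MetricSpace X] : Type u :=
  {A : NonemptyCompacts X // IsConnected (A : Set X)}

abbrev HilbertCube : Type := ℕ → unitInterval

def SemiHairy {X : Type u} [TopologicalSpace X] (p : X) : Prop :=
  (¬ FiniteOrd p) ∨ p ∈ closure ({q : X | RamPt q} \ {p})

def shRel {X : Type u} [TopologicalSpace X] (p : X) : Set X :=
  {q | SemiHairy q ∧ ∀ A : Set X, IsArcWith A p q → A ∩ {x : X | SemiHairy x} = {q}}

def IsFreeArcWith {X : Type u} [TopologicalSpace X] (A : Set X) (x y : X) : Prop :=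
  (EndPt x ∨ RamPt x) ∧ (EndPt y ∨ RamPt y) ∧
  ∃ h : unitInterval ≃ₜ ↥A, (h 0 : X) = x ∧ (h 1 : X) = y ∧
    ∀ t : unitInterval, (t : ℝ) ∈ Set.Ioo (0:ℝ) 1 → (h t : X) ∈ interior A

def IsFreeArc {X : Type u} [TopologicalSpace X] (A : Set X) : Prop :=
  ∃ x y, IsFreeArcWith A x y

def IsSubcontinuum {X : Type u} [TopologicalSpace X] (A : Set X) : Prop :=
  A.Nonempty ∧ IsCompact A ∧ IsConnected A

def DecomposableSet {X : Type u} [TopologicalSpace X] (C : Set X) : Prop :=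
  ∃ A B : Set X, IsSubcontinuum A ∧ IsSubcontinuum B ∧ A ⊆ C ∧ B ⊆ C ∧
    A ≠ C ∧ B ≠ C ∧ A ∪ B = C

def HereditarilyDecomposable (X : Type u) [TopologicalSpace X] : Prop :=
  ∀ C : Set X, IsSubcontinuum C → C.Nontrivial → DecomposableSet C

def HereditarilyIndecomposable (X : Type u) [TopologicalSpace X] : Prop :=
  ∀ C : Set X, IsSubcontinuum C → C.Nontrivial → ¬ DecomposableSet C

/-- `X` contains a free arc (arc whose non-endpoints are interior to the arc in `X`). -/
def HasFreeArcInt (X : Type u) [TopologicalSpace X] : Prop :=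
  ∃ (A : Set X) (h : unitInterval ≃ₜ ↥A),
    ∀ t : unitInterval, (t : ℝ) ∈ Set.Ioo (0:ℝ) 1 → (h t : X) ∈ interior A

set_option linter.unusedSectionVars false


namespace SineTrick

variable {X : Type u} [MetricSpace X]

/-- The oscillating function used to blow up the point `c`. -/
noncomputable def gfun (c : X) (z : X) : ℝ := 1 + Real.sin (dist z c)⁻¹

/-- The graph of `gfun c` over `X \ {c}`. -/
def graphSet (c : X) : Set (X × ℝ) := {w | w.1 ≠ c ∧ w.2 = gfun c w.1}

/-- The continuum: closure of the graph. -/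
def sineC (c : X) : Set (X × ℝ) := closure (graphSet c)

lemma gfun_mem_Icc (c z : X) : gfun c z ∈ Icc (0:ℝ) 2 := by
  unfold gfun
  constructor
  · nlinarith [Real.neg_one_le_sin (dist z c)⁻¹]
  · nlinarith [Real.sin_le_one (dist z c)⁻¹]

lemma sineC_subset (c : X) : sineC c ⊆ univ ×ˢ Icc (0:ℝ) 2 := by
  apply closure_minimal _ (isClosed_univ.prod isClosed_Icc)
  rintro ⟨z, r⟩ ⟨-, hr⟩
  exact ⟨trivial, hr ▸ gfun_mem_Icc c z⟩

lemma isClosed_sineC (c : X) : IsClosed (sineC c) := isClosed_closure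

lemma isCompact_sineC [CompactSpace X] (c : X) : IsCompact (sineC c) :=
  (isCompact_univ.prod isCompact_Icc).of_isClosed_subset (isClosed_sineC c) (sineC_subset c)

lemma graph_mem_sineC {c z : X} (h : z ≠ c) : (z, gfun c z) ∈ sineC c :=
  subset_closure ⟨h, rfl⟩

lemma continuousAt_gfun {c z : X} (h : z ≠ c) : ContinuousAt (gfun c) z := by
  have hd : ContinuousAt (fun z : X => dist z c) z :=
    (continuous_id.dist continuous_const).continuousAt
  have : ContinuousAt (fun z : X => (dist z c)⁻¹) z :=
    hd.inv₀ (by simpa [dist_ne_zero] using h)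
  exact continuousAt_const.add (Real.continuous_sin.continuousAt.comp this)

/-- Rigidity: any point of `sineC c` off the fiber over `c` lies on the graph. -/
lemma snd_eq_of_mem {c : X} {w : X × ℝ} (hw : w ∈ sineC c) (h1 : w.1 ≠ c) :
    w.2 = gfun c w.1 := by
  obtain ⟨u, hu, hlim⟩ := mem_closure_iff_seq_limit.1 hw
  have h1' : Filter.Tendsto (fun n => (u n).1) Filter.atTop (nhds w.1) :=
    (continuous_fst.tendsto w).comp hlim
  have h2' : Filter.Tendsto (fun n => (u n).2) Filter.atTop (nhds w.2) :=
    (continuous_snd.tendsto w).comp hlim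
  have h3 : Filter.Tendsto (fun n => gfun c (u n).1) Filter.atTop (nhds (gfun c w.1)) :=
    (continuousAt_gfun h1).tendsto.comp h1'
  have : (fun n => (u n).2) = fun n => gfun c (u n).1 := funext fun n => (hu n).2
  rw [this] at h2'
  exact tendsto_nhds_unique h2' h3

/-- Key density lemma: relative to any preconnected `K ∋ c` with a point `≠ c`,
the whole segment over `c` is in the closure of the graph over `K \ {c}`. -/
lemma fiber_mem_closure_graph_over {c : X} {K : Set X} (hK : IsPreconnected K) (hcK : c ∈ K)
    {z₁ : X} (hz₁K : z₁ ∈ K) (hz₁c : z₁ ≠ c) {s : ℝ} (hs : s ∈ Icc (0:ℝ) 2) :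
    ((c, s) : X × ℝ) ∈ closure {w : X × ℝ | w.1 ∈ K ∧ w.1 ≠ c ∧ w.2 = gfun c w.1} := by
  rw [Metric.mem_closure_iff]
  intro ε hε
  -- choose the frequency
  set θ : ℝ := Real.arcsin (s - 1) with hθ
  have hsθ : Real.sin θ = s - 1 := Real.sin_arcsin (by linarith [hs.1]) (by linarith [hs.2])
  have hd1 : (0:ℝ) < dist z₁ c := dist_pos.2 hz₁c
  set m : ℝ := min ε (dist z₁ c) with hm
  have hm0 : 0 < m := lt_min hε hd1
  obtain ⟨n, hn⟩ := exists_nat_gt ((m⁻¹ + |θ| + 1) / (2 * Real.pi))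
  have h2pi : (0:ℝ) < 2 * Real.pi := by positivity
  have hbig : m⁻¹ + |θ| + 1 < n * (2 * Real.pi) := by
    rw [div_lt_iff₀ h2pi] at hn; linarith
  have hpos : 0 < θ + n * (2 * Real.pi) := by
    have := le_abs_self θ; have := neg_abs_le θ
    have hminv : 0 < m⁻¹ := inv_pos.2 hm0
    linarith
  set t : ℝ := (θ + n * (2 * Real.pi))⁻¹ with ht
  have htpos : 0 < t := inv_pos.2 hpos
  have htm : t < m := by
    rw [ht, inv_lt_comm₀ hpos hm0]
    have := neg_abs_le θ
    linarith
  -- find a point at distance t from c inside K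
  have hIVT : Icc (dist c c) (dist z₁ c) ⊆ (fun z => dist z c) '' K :=
    hK.intermediate_value hcK hz₁K ((continuous_id.dist continuous_const).continuousOn)
  have htmem : t ∈ Icc (dist c c) (dist z₁ c) := by
    simp only [dist_self]
    exact ⟨le_of_lt htpos, le_trans (le_of_lt htm) (min_le_right _ _)⟩
  obtain ⟨z, hzK, hzt0⟩ := hIVT htmem
  have hzt : dist z c = t := hzt0
  have hzc : z ≠ c := by
    intro h; rw [h, dist_self] at hzt; exact absurd hzt.symm (ne_of_gt htpos)
  have hgz : gfun c z = s := by
    have : (dist z c)⁻¹ = θ + n * (2 * Real.pi) := by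
      rw [hzt, ht, inv_inv]
    rw [gfun, this, Real.sin_add_nat_mul_two_pi, hsθ]; ring
  refine ⟨(z, s), ⟨hzK, hzc, by simp [hgz]⟩, ?_⟩
  have hde : dist ((c, s) : X × ℝ) (z, s) = dist z c := by
    rw [Prod.dist_eq, dist_self, dist_comm]
    exact max_eq_left dist_nonneg
  rw [hde, hzt]
  exact lt_of_lt_of_le htm (min_le_left _ _)


/-- The whole segment over `c` lies in `sineC c`. -/
lemma fiber_mem_sineC [ConnectedSpace X] {c z₁ : X} (hz₁c : z₁ ≠ c) {s : ℝ}
    (hs : s ∈ Icc (0:ℝ) 2) : ((c, s) : X × ℝ) ∈ sineC c := by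
  have h := fiber_mem_closure_graph_over (isPreconnected_univ (α := X)) (mem_univ c)
    (mem_univ z₁) hz₁c hs
  have : {w : X × ℝ | w.1 ∈ univ ∧ w.1 ≠ c ∧ w.2 = gfun c w.1} = graphSet c := by
    ext w; simp [graphSet]
  rwa [this] at h

/-- Projection is onto. -/
lemma pi_surj [ConnectedSpace X] {c z₁ : X} (hz₁c : z₁ ≠ c) (z : X) :
    ∃ r : ℝ, ((z, r) : X × ℝ) ∈ sineC c := by
  by_cases h : z = c
  · exact ⟨0, h ▸ fiber_mem_sineC hz₁c ⟨le_refl _, by norm_num⟩⟩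
  · exact ⟨gfun c z, graph_mem_sineC h⟩

lemma snd_mem_Icc_of_mem {c : X} {w : X × ℝ} (hw : w ∈ sineC c) : w.2 ∈ Icc (0:ℝ) 2 :=
  (sineC_subset c hw).2

/-- `sineC c` is connected. -/
lemma isConnected_sineC [CompactSpace X] [ConnectedSpace X] {c z₁ : X} (hz₁c : z₁ ≠ c) :
    IsConnected (sineC c) := by
  have hfib0 : ((c, 0) : X × ℝ) ∈ sineC c := fiber_mem_sineC hz₁c ⟨le_refl _, by norm_num⟩
  refine ⟨⟨(c, 0), hfib0⟩, ?_⟩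
  rw [isPreconnected_iff_subset_of_fully_disjoint_closed (isClosed_sineC c)]
  intro u v hu hv hcover hdisj
  -- the fiber is preconnected and contained in sineC c
  have hfib : ({c} ×ˢ Icc (0:ℝ) 2 : Set (X × ℝ)) ⊆ sineC c := by
    rintro ⟨z, r⟩ ⟨hz, hr⟩
    rcases hz with rfl
    exact fiber_mem_sineC hz₁c hr
  have hfibconn : IsPreconnected ({c} ×ˢ Icc (0:ℝ) 2 : Set (X × ℝ)) :=
    isPreconnected_singleton.prod isPreconnected_Icc
  have hfibclosed : IsClosed ({c} ×ˢ Icc (0:ℝ) 2 : Set (X × ℝ)) :=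
    isClosed_singleton.prod isClosed_Icc
  have hkey : ∀ u' v', IsClosed u' → IsClosed v' → sineC c ⊆ u' ∪ v' → Disjoint u' v' →
      ({c} ×ˢ Icc (0:ℝ) 2 : Set (X × ℝ)) ⊆ v' → sineC c ⊆ v' := by
    intro u' v' hu' hv' hcover' hdisj' hfv
    set Pu := Prod.fst '' (sineC c ∩ u') with hPu
    set Pv := Prod.fst '' (sineC c ∩ v') with hPv
    have hPuc : IsClosed Pu :=
      (((isCompact_sineC c).inter_right hu').image continuous_fst).isClosed
    have hPvc : IsClosed Pv :=
      (((isCompact_sineC c).inter_right hv').image continuous_fst).isClosed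
    have hPcover : (univ : Set X) ⊆ Pu ∪ Pv := by
      intro z _
      obtain ⟨r, hr⟩ := pi_surj hz₁c z
      rcases hcover' hr with h | h
      · exact Or.inl ⟨(z, r), ⟨hr, h⟩, rfl⟩
      · exact Or.inr ⟨(z, r), ⟨hr, h⟩, rfl⟩
    have hPdisj : Disjoint Pu Pv := by
      rw [Set.disjoint_left]
      rintro z ⟨⟨z1, r1⟩, ⟨hm1, hu1⟩, rfl⟩ ⟨⟨z2, r2⟩, ⟨hm2, hv2⟩, h21⟩
      by_cases hzc : z1 = c
      · -- then (z1, r1) is in the fiber hence in v', contradicting disjointness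
        have : ((z1, r1) : X × ℝ) ∈ ({c} ×ˢ Icc (0:ℝ) 2 : Set (X × ℝ)) :=
          ⟨hzc, snd_mem_Icc_of_mem hm1⟩
        exact (Set.disjoint_left.1 hdisj') hu1 (hfv this)
      · have h1 : r1 = gfun c z1 := snd_eq_of_mem hm1 hzc
        have h2 : r2 = gfun c z2 := snd_eq_of_mem hm2 (h21 ▸ hzc)
        have : ((z1, r1) : X × ℝ) = (z2, r2) := by
          have hz : z1 = z2 := h21.symm
          subst hz
          rw [h1, h2]
        rw [this] at hu1
        exact (Set.disjoint_left.1 hdisj') hu1 hv2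
    have := (isPreconnected_iff_subset_of_fully_disjoint_closed isClosed_univ).1
      isPreconnected_univ Pu Pv hPuc hPvc hPcover hPdisj
    have hcPv : c ∈ Pv := ⟨(c, 0), ⟨hfib0, hfv ⟨rfl, le_refl _, by norm_num⟩⟩, rfl⟩
    rcases this with h | h
    · exact absurd (Set.disjoint_left.1 hPdisj (h (mem_univ c)) hcPv) (fun f => f)
    · -- univ ⊆ Pv, so sineC c ∩ u' = ∅
      intro w hw
      rcases hcover' hw with hwu | hwv
      · exact absurd (Set.disjoint_left.1 hPdisj ⟨w, ⟨hw, hwu⟩, rfl⟩ (h (mem_univ w.1)))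
          (fun f => f)
      · exact hwv
  rcases (isPreconnected_iff_subset_of_fully_disjoint_closed hfibclosed).1 hfibconn u v hu hv
      (fun w hw => hcover (hfib hw)) hdisj with hfu | hfv
  · exact Or.inl (hkey v u hv hu (by rwa [union_comm]) hdisj.symm hfu)
  · exact Or.inr (hkey u v hu hv hcover hdisj hfv)


/-! ### The subtype space -/

/-- The new continuum as a type. -/
abbrev Yt (c : X) : Type u := ↥(sineC c)

/-- Projection back to `X`. -/
def pr (c : X) : Yt c → X := fun w => (w : X × ℝ).1

lemma continuous_pr (c : X) : Continuous (pr c) := continuous_fst.comp continuous_subtype_val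

lemma pr_eq_off_fiber {c : X} {w w' : Yt c} (h : pr c w = pr c w') (hne : pr c w ≠ c) :
    w = w' := by
  apply Subtype.ext
  apply Prod.ext h
  have h1 : (w : X × ℝ).2 = gfun c (w : X × ℝ).1 := snd_eq_of_mem w.2 hne
  have h2 : (w' : X × ℝ).2 = gfun c (w' : X × ℝ).1 :=
    snd_eq_of_mem w'.2 (show pr c w' ≠ c by rw [← h]; exact hne)
  rw [h1, h2, show (w : X × ℝ).1 = (w' : X × ℝ).1 from h]

/-- The fiber over `c` inside `Yt c`. -/
def fibt (c : X) : Set (Yt c) := {w | pr c w = c}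

lemma isClosed_fibt (c : X) : IsClosed (fibt c) :=
  isClosed_singleton.preimage (continuous_pr c)

lemma isPreconnected_fibt [ConnectedSpace X] {c z₁ : X} (hz₁c : z₁ ≠ c) :
    IsPreconnected (fibt c) := by
  have hmem : ∀ r : ℝ, ((c, min 2 (max 0 r)) : X × ℝ) ∈ sineC c := fun r =>
    fiber_mem_sineC hz₁c ⟨le_min (by norm_num) (le_max_left _ _), min_le_left _ _⟩
  set ρ : ℝ → Yt c := fun r => ⟨(c, min 2 (max 0 r)), hmem r⟩ with hρ
  have hcont : Continuous ρ := by
    apply Continuous.subtype_mk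
    exact continuous_const.prodMk (continuous_const.min (continuous_const.max continuous_id))
  have himg : fibt c = ρ '' Icc (0:ℝ) 2 := by
    ext w
    constructor
    · intro hw
      have hseq : (w : X × ℝ).2 ∈ Icc (0:ℝ) 2 := snd_mem_Icc_of_mem w.2
      refine ⟨(w : X × ℝ).2, hseq, ?_⟩
      have : min 2 (max 0 (w : X × ℝ).2) = (w : X × ℝ).2 := by
        rw [max_eq_right hseq.1, min_eq_right hseq.2]
      exact Subtype.ext (Prod.ext hw.symm this)
    · rintro ⟨r, -, rfl⟩
      exact rfl
  rw [himg]
  exact isPreconnected_Icc.image ρ hcont.continuousOn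

section Compact

variable [CompactSpace X] [ConnectedSpace X]

lemma compactSpace_Yt (c : X) : CompactSpace (Yt c) :=
  isCompact_iff_compactSpace.1 (isCompact_sineC c)

lemma pr_surj {c z₁ : X} (hz₁c : z₁ ≠ c) : Function.Surjective (pr c) := by
  intro z
  obtain ⟨r, hr⟩ := pi_surj hz₁c z
  exact ⟨⟨(z, r), hr⟩, rfl⟩

/-- Key dichotomy used both for preimages and for global connectivity. -/
lemma dichotomy {c z₁ : X} (hz₁c : z₁ ≠ c) {K : Set X} (hKcl : IsClosed K)
    (hK : IsPreconnected K) {u v : Set (Yt c)} (hu : IsClosed u) (hv : IsClosed v)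
    (hcover : pr c ⁻¹' K ⊆ u ∪ v) (hdisj : Disjoint u v)
    (hfv : fibt c ∩ pr c ⁻¹' K ⊆ v) : pr c ⁻¹' K ⊆ u ∨ pr c ⁻¹' K ⊆ v := by
  haveI := compactSpace_Yt c
  set Pu := pr c '' (pr c ⁻¹' K ∩ u) with hPu
  set Pv := pr c '' (pr c ⁻¹' K ∩ v) with hPv
  have hKcomp : IsCompact (pr c ⁻¹' K) := (hKcl.preimage (continuous_pr c)).isCompact
  have hPuc : IsClosed Pu := ((hKcomp.inter_right hu).image (continuous_pr c)).isClosed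
  have hPvc : IsClosed Pv := ((hKcomp.inter_right hv).image (continuous_pr c)).isClosed
  have hPcover : K ⊆ Pu ∪ Pv := by
    intro z hz
    obtain ⟨w, hw⟩ := pr_surj hz₁c z
    have hwK : w ∈ pr c ⁻¹' K := by rw [Set.mem_preimage, hw]; exact hz
    rcases hcover hwK with h | h
    · exact Or.inl ⟨w, ⟨hwK, h⟩, hw⟩
    · exact Or.inr ⟨w, ⟨hwK, h⟩, hw⟩
  have hPdisj : Disjoint Pu Pv := by
    rw [Set.disjoint_left]
    rintro z ⟨w1, ⟨hK1, hu1⟩, rfl⟩ ⟨w2, ⟨hK2, hv2⟩, h21⟩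
    by_cases hzc : pr c w1 = c
    · have : w1 ∈ v := hfv ⟨hzc, hK1⟩
      exact (Set.disjoint_left.1 hdisj) hu1 this
    · have : w2 = w1 := pr_eq_off_fiber h21 (h21 ▸ hzc)
      rw [this] at hv2
      exact (Set.disjoint_left.1 hdisj) hu1 hv2
  rcases (isPreconnected_iff_subset_of_fully_disjoint_closed hKcl).1 hK Pu Pv hPuc hPvc
      hPcover hPdisj with h | h
  · -- K ⊆ Pu : then the preimage avoids v
    refine Or.inl fun w hw => ?_
    rcases hcover hw with hwu | hwv
    · exact hwu
    · have : pr c w ∈ Pv := ⟨w, ⟨hw, hwv⟩, rfl⟩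
      exact absurd (Set.disjoint_left.1 hPdisj (h hw) this) (fun f => f)
  · refine Or.inr fun w hw => ?_
    rcases hcover hw with hwu | hwv
    · have : pr c w ∈ Pu := ⟨w, ⟨hw, hwu⟩, rfl⟩
      exact absurd (Set.disjoint_left.1 hPdisj this (h hw)) (fun f => f)
    · exact hwv

lemma isPreconnected_preimage {c z₁ : X} (hz₁c : z₁ ≠ c) {K : Set X}
    (hKcl : IsClosed K) (hK : IsPreconnected K) : IsPreconnected (pr c ⁻¹' K) := by
  rw [isPreconnected_iff_subset_of_fully_disjoint_closed (hKcl.preimage (continuous_pr c))]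
  intro u v hu hv hcover hdisj
  have hfibsub : IsPreconnected (fibt c ∩ pr c ⁻¹' K) := by
    by_cases hcK : c ∈ K
    · have : fibt c ∩ pr c ⁻¹' K = fibt c := by
        apply inter_eq_left.2
        intro w hw
        rw [Set.mem_preimage, hw]; exact hcK
      rw [this]; exact isPreconnected_fibt hz₁c
    · have : fibt c ∩ pr c ⁻¹' K = ∅ := by
        ext w; simp only [mem_inter_iff, mem_empty_iff_false, iff_false]
        rintro ⟨hw, hwK⟩
        exact hcK (hw ▸ hwK)
      rw [this]; exact isPreconnected_empty
  have hfibclosed : IsClosed (fibt c ∩ pr c ⁻¹' K) :=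
    (isClosed_fibt c).inter (hKcl.preimage (continuous_pr c))
  rcases (isPreconnected_iff_subset_of_fully_disjoint_closed hfibclosed).1 hfibsub u v hu hv
      (fun w hw => hcover hw.2) hdisj with hfu | hfv
  · rcases dichotomy hz₁c hKcl hK hv hu (by rwa [union_comm]) hdisj.symm hfu with h | h
    · exact Or.inr h
    · exact Or.inl h
  · exact dichotomy hz₁c hKcl hK hu hv hcover hdisj hfv

/-- Uniqueness of lifts: a compact connected set in `Yt c` whose image contains a point `p ≠ c`
is the full preimage of its image. -/
lemma lift_unique {c p : X} (hpc : p ≠ c) {S : Set (Yt c)} (hSc : IsCompact S)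
    (hScon : IsPreconnected S) (hpS : p ∈ pr c '' S) :
    S = pr c ⁻¹' (pr c '' S) := by
  apply Subset.antisymm (subset_preimage_image _ _)
  intro w hw
  rw [Set.mem_preimage] at hw
  by_cases hwc : pr c w = c
  · -- w is in the fiber; the fiber is contained in S
    have hcK : c ∈ pr c '' S := Set.mem_of_eq_of_mem hwc.symm hw
    have hKconn : IsPreconnected (pr c '' S) := hScon.image _ (continuous_pr c).continuousOn
    have hs : (w : X × ℝ).2 ∈ Icc (0:ℝ) 2 := snd_mem_Icc_of_mem w.2
    have hval : ((c, (w : X × ℝ).2) : X × ℝ) ∈ closure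
        {w' : X × ℝ | w'.1 ∈ pr c '' S ∧ w'.1 ≠ c ∧ w'.2 = gfun c w'.1} :=
      fiber_mem_closure_graph_over hKconn hcK hpS hpc hs
    have hSval : IsClosed (Subtype.val '' S) := (hSc.image continuous_subtype_val).isClosed
    have hsub : {w' : X × ℝ | w'.1 ∈ pr c '' S ∧ w'.1 ≠ c ∧ w'.2 = gfun c w'.1} ⊆
        Subtype.val '' S := by
      rintro ⟨z, r⟩ ⟨⟨ws, hwsS, hws⟩, hzc, hr⟩
      refine ⟨ws, hwsS, ?_⟩
      have : (ws : X × ℝ).2 = gfun c (ws : X × ℝ).1 :=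
        snd_eq_of_mem ws.2 (show pr c ws ≠ c by rw [hws]; exact hzc)
      apply Prod.ext hws
      rw [this, show ((ws : X × ℝ)).1 = z from hws, hr]
  -- closure is inside the closed set
    have : ((c, (w : X × ℝ).2) : X × ℝ) ∈ Subtype.val '' S :=
      (hSval.closure_subset_iff.2 hsub) hval
    obtain ⟨ws, hwsS, hws⟩ := this
    have : (w : X × ℝ) = ((c, (w : X × ℝ).2) : X × ℝ) := Prod.ext hwc rfl
    have hww : w = ws := Subtype.ext (by rw [this, ← hws])
    rw [hww]; exact hwsS
  · obtain ⟨ws, hwsS, hws⟩ := hw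
    have : ws = w := pr_eq_off_fiber hws (hws ▸ hwc)
    rw [← this]; exact hwsS

end Compact


/-! ### Hyperspace -/

section Hyper

variable [CompactSpace X] [ConnectedSpace X]

/-- Image map on nonempty compacts. -/
noncomputable def prNC (c : X) : NonemptyCompacts (Yt c) → NonemptyCompacts X := fun S =>
  ⟨⟨pr c '' S, S.isCompact.image (continuous_pr c)⟩, S.nonempty.image _⟩

lemma coe_prNC (c : X) (S : NonemptyCompacts (Yt c)) :
    (prNC c S : Set X) = pr c '' S := rfl

lemma edist_pr_le (c : X) (w b : Yt c) : edist (pr c w) (pr c b) ≤ edist w b := by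
  rw [Subtype.edist_eq, Prod.edist_eq]
  exact le_max_left _ _

lemma prNC_lipschitz (c : X) : LipschitzWith 1 (prNC c) := by
  apply LipschitzWith.of_edist_le
  intro A B
  have key : ∀ A B : NonemptyCompacts (Yt c), ∀ x ∈ (prNC c A : Set X),
      EMetric.infEdist x (prNC c B : Set X) ≤ edist A B := by
    rintro A B x hx
    rw [coe_prNC] at hx
    obtain ⟨w, hw, rfl⟩ := hx
    have h1 : EMetric.infEdist (pr c w) (prNC c B : Set X) ≤ EMetric.infEdist w B := by
      show Metric.infEDist _ _ ≤ Metric.infEDist _ _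
      rw [Metric.infEDist, Metric.infEDist]
      refine le_iInf₂ fun b hb => ?_
      calc ⨅ y ∈ (prNC c B : Set X), edist (pr c w) y ≤ edist (pr c w) (pr c b) := by
            apply iInf₂_le (pr c b)
            rw [coe_prNC]
            exact mem_image_of_mem _ hb
        _ ≤ edist w b := edist_pr_le c w b
    exact h1.trans (EMetric.infEdist_le_hausdorffEdist_of_mem hw)
  show EMetric.hausdorffEdist (prNC c A : Set X) (prNC c B : Set X) ≤ edist A B
  exact EMetric.hausdorffEdist_le_of_infEdist (key A B)
    (fun x hx => (edist_comm A B) ▸ key B A x hx)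

end Hyper

/-- The set defining `Cp` is closed in the hyperspace. -/
lemma isClosed_cpSet (Z : Type*) [MetricSpace Z] (z0 : Z) :
    IsClosed {S : NonemptyCompacts Z | IsConnected (S : Set Z) ∧ z0 ∈ (S : Set Z)} := by
  apply IsSeqClosed.isClosed
  intro f S hf htends
  have hedist : ∀ ε : ENNReal, 0 < ε → ∃ n, EMetric.hausdorffEdist (f n : Set Z) S < ε := by
    intro ε hε
    obtain ⟨n, hn⟩ := (EMetric.tendsto_atTop.1 htends ε hε)
    exact ⟨n, hn n le_rfl⟩
  constructor
  · -- connectedness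
    refine ⟨S.nonempty, ?_⟩
    rw [isPreconnected_iff_subset_of_fully_disjoint_closed S.isCompact.isClosed]
    intro u v hu hv hcover hdisj
    by_cases hA : ((S : Set Z) ∩ u) = ∅
    · refine Or.inr fun x hx => ?_
      rcases hcover hx with h | h
      · exact absurd (Set.eq_empty_iff_forall_notMem.1 hA x ⟨hx, h⟩) (fun f => f)
      · exact h
    by_cases hB : ((S : Set Z) ∩ v) = ∅
    · refine Or.inl fun x hx => ?_
      rcases hcover hx with h | h
      · exact h
      · exact absurd (Set.eq_empty_iff_forall_notMem.1 hB x ⟨hx, h⟩) (fun f => f)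
    exfalso
    have hAc : IsCompact ((S : Set Z) ∩ u) := S.isCompact.inter_right hu
    have hBc : IsCompact ((S : Set Z) ∩ v) := S.isCompact.inter_right hv
    have hABdisj : Disjoint ((S : Set Z) ∩ u) ((S : Set Z) ∩ v) :=
      (hdisj.mono (inter_subset_right) (inter_subset_right))
    obtain ⟨δ, hδ, hTdisj⟩ := hABdisj.exists_thickenings hAc hBc.isClosed
    obtain ⟨n, hn⟩ := hedist (ENNReal.ofReal δ) (by simp [hδ])
    have hSsplit : (S : Set Z) = ((S : Set Z) ∩ u) ∪ ((S : Set Z) ∩ v) := by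
      rw [← Set.inter_union_distrib_left]
      exact (Set.inter_eq_left.2 hcover).symm
    have hsub : (f n : Set Z) ⊆
        Metric.thickening δ ((S : Set Z) ∩ u) ∪ Metric.thickening δ ((S : Set Z) ∩ v) := by
      intro x hx
      have : EMetric.infEdist x (S : Set Z) < ENNReal.ofReal δ :=
        lt_of_le_of_lt (EMetric.infEdist_le_hausdorffEdist_of_mem hx) hn
      have hxT : x ∈ Metric.thickening δ (S : Set Z) :=
        Metric.mem_thickening_iff_infEdist_lt.2 this
      rw [hSsplit, Metric.thickening_union] at hxT
      exact hxT
    have hmeet : ∀ t : Set Z, ((S : Set Z) ∩ t).Nonempty →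
        ((f n : Set Z) ∩ Metric.thickening δ ((S : Set Z) ∩ t)).Nonempty := by
      rintro t ⟨a, ha⟩
      have : EMetric.hausdorffEdist (S : Set Z) (f n : Set Z) < ENNReal.ofReal δ := by
        show Metric.hausdorffEDist _ _ < _
        rw [Metric.hausdorffEDist_comm]; exact hn
      obtain ⟨y, hy, hya⟩ := EMetric.exists_edist_lt_of_hausdorffEdist_lt ha.1 this
      refine ⟨y, hy, Metric.mem_thickening_iff_infEdist_lt.2 ?_⟩
      calc EMetric.infEdist y ((S : Set Z) ∩ t) ≤ edist y a :=
            EMetric.infEdist_le_edist_of_mem ha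
        _ < ENNReal.ofReal δ := by rwa [edist_comm]
    obtain ⟨yA, hyA, hyAT⟩ := hmeet u (Set.nonempty_iff_ne_empty.2 hA)
    obtain ⟨yB, hyB, hyBT⟩ := hmeet v (Set.nonempty_iff_ne_empty.2 hB)
    rcases IsPreconnected.subset_or_subset Metric.isOpen_thickening Metric.isOpen_thickening
        hTdisj hsub (hf n).1.2 with h | h
    · exact Set.disjoint_left.1 hTdisj (h hyB) hyBT
    · exact Set.disjoint_left.1 hTdisj hyAT (h hyA)
  · -- membership
    have h0 : EMetric.infEdist z0 (S : Set Z) = 0 := by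
      by_contra h
      have hpos : 0 < EMetric.infEdist z0 (S : Set Z) := pos_iff_ne_zero.2 h
      obtain ⟨n, hn⟩ := hedist _ hpos
      have : EMetric.infEdist z0 (S : Set Z) ≤
          EMetric.infEdist z0 (f n : Set Z) + EMetric.hausdorffEdist (f n : Set Z) S :=
        EMetric.infEdist_le_infEdist_add_hausdorffEdist
      rw [show EMetric.infEdist z0 (f n : Set Z) = 0 from EMetric.infEdist_zero_of_mem (hf n).2, zero_add] at this
      exact absurd (lt_of_le_of_lt this hn) (lt_irrefl _)
    rw [← S.isCompact.isClosed.closure_eq]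
    exact EMetric.mem_closure_iff_infEdist_zero.2 h0


section Homeo

variable [CompactSpace X] [ConnectedSpace X]

/-- The basepoint of `Yt c` above `p`. -/
noncomputable def basept {c p : X} (hpc : p ≠ c) : Yt c := ⟨(p, gfun c p), graph_mem_sineC hpc⟩

lemma pr_basept {c p : X} (hpc : p ≠ c) : pr c (basept hpc) = p := rfl

/-- The bijection between the hyperspaces. -/
noncomputable def hyperEquiv {c p : X} (hpc : p ≠ c) :
    Cp (Yt c) (basept hpc) ≃ Cp X p where
  toFun S := ⟨prNC c S.1,
    ⟨(coe_prNC c S.1) ▸ (S.2.1.image _ (continuous_pr c).continuousOn),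
     (coe_prNC c S.1) ▸ ⟨basept hpc, S.2.2, rfl⟩⟩⟩
  invFun K := by
    haveI := compactSpace_Yt c
    exact ⟨⟨⟨pr c ⁻¹' (K.1 : Set X),
        (K.1.isCompact.isClosed.preimage (continuous_pr c)).isCompact⟩,
        ⟨basept hpc, K.2.2⟩⟩,
      ⟨⟨basept hpc, K.2.2⟩, isPreconnected_preimage hpc K.1.isCompact.isClosed K.2.1.2⟩,
      K.2.2⟩
  left_inv S := by
    apply Subtype.ext
    apply NonemptyCompacts.ext
    exact (lift_unique hpc S.1.isCompact S.2.1.2 ⟨basept hpc, S.2.2, rfl⟩).symm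
  right_inv K := by
    apply Subtype.ext
    apply NonemptyCompacts.ext
    exact Set.image_preimage_eq _ (pr_surj hpc)

/-- The homeomorphism. -/
noncomputable def hyperHomeo {c p : X} (hpc : p ≠ c) :
    Cp X p ≃ₜ Cp (Yt c) (basept hpc) := by
  haveI := compactSpace_Yt c
  haveI : CompactSpace (Cp (Yt c) (basept hpc)) :=
    isCompact_iff_compactSpace.1 (isClosed_cpSet (Yt c) (basept hpc)).isCompact
  have hcont : Continuous (hyperEquiv (X := X) hpc) := by
    have h1 : Continuous (fun S : Cp (Yt c) (basept hpc) => prNC c S.1) :=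
      (prNC_lipschitz c).continuous.comp continuous_subtype_val
    exact h1.subtype_mk _
  exact (Continuous.homeoOfEquivCompactToT2 (f := hyperEquiv (X := X) hpc) hcont).symm

end Homeo


/-! ### Finite graphs are connected im kleinen -/

lemma arc_param {Z : Type u} [MetricSpace Z] {A : Set Z} {x y : Z} (hA : IsArcWith A x y) :
    ∃ f : ℝ → Z, Continuous f ∧ f '' (Icc 0 1) = A ∧
      ∀ u ∈ Icc (0:ℝ) 1, ∀ v ∈ Icc (0:ℝ) 1, f u = f v → u = v := by
  obtain ⟨φ, -, -⟩ := hA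
  refine ⟨fun r => (φ (Set.projIcc 0 1 zero_le_one r) : Z), ?_, ?_, ?_⟩
  · exact continuous_subtype_val.comp (φ.continuous.comp continuous_projIcc)
  · ext z
    constructor
    · rintro ⟨r, -, rfl⟩; exact (φ _).2
    · intro hz
      obtain ⟨t, ht⟩ := φ.surjective ⟨z, hz⟩
      refine ⟨(t : ℝ), ⟨t.2.1, t.2.2⟩, ?_⟩
      show (φ (Set.projIcc 0 1 zero_le_one ((t : ℝ))) : Z) = z
      rw [Set.projIcc_val, ht]
  · intro u hu v hv huv
    have h1 : Set.projIcc 0 1 zero_le_one u = ⟨u, hu⟩ := Set.projIcc_of_mem _ hu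
    have h2 : Set.projIcc 0 1 zero_le_one v = ⟨v, hv⟩ := Set.projIcc_of_mem _ hv
    have huv' : (φ (⟨u, hu⟩ : unitInterval) : Z) = (φ (⟨v, hv⟩ : unitInterval) : Z) := by
      rw [← h1, ← h2]; exact huv
    have := φ.injective (Subtype.coe_injective huv')
    exact congrArg Subtype.val this

lemma finiteGraph_cik {Z : Type u} [MetricSpace Z] (hZ : IsFiniteGraphSp Z) (q : Z)
    {ε : ℝ} (hε : 0 < ε) :
    ∃ M : Set Z, IsPreconnected M ∧ M ⊆ Metric.ball q ε ∧ M ∈ 𝓝 q := by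
  obtain ⟨-, -, n, A, e, harc, hcover, -⟩ := hZ
  choose f hfc hfA hfinj using fun i => arc_param (harc i)
  have hqU : q ∈ ⋃ i, A i := by rw [hcover]; exact mem_univ q
  obtain ⟨i₀, hi₀⟩ := mem_iUnion.1 hqU
  -- parameters of q on the arcs containing it
  have hτ' : ∀ i, ∃ τ : ℝ, q ∈ A i → τ ∈ Icc (0:ℝ) 1 ∧ f i τ = q := by
    intro i
    by_cases h : q ∈ A i
    · rw [← hfA i] at h; obtain ⟨τ, h1, h2⟩ := h
      exact ⟨τ, fun _ => ⟨h1, h2⟩⟩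
    · exact ⟨0, fun hq => absurd hq h⟩
  choose τ hτ using hτ'
  -- moduli of continuity
  have hη' : ∀ i, ∃ η : ℝ, 0 < η ∧
      (q ∈ A i → ∀ r : ℝ, dist r (τ i) ≤ η → dist (f i r) q < ε) := by
    intro i
    obtain ⟨δ, hδ0, hδ⟩ := Metric.continuous_iff.1 (hfc i) (τ i) ε hε
    refine ⟨δ/2, by linarith, fun hq r hr => ?_⟩
    have := hδ r (lt_of_le_of_lt hr (by linarith))
    rwa [(hτ i hq).2] at this
  choose η hη0 hη using hη'
  set N : Fin n → Set Z := fun i => f i '' Icc (τ i - η i) (τ i + η i) with hN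
  set M : Set Z := ⋃ i, ⋃ (_ : q ∈ A i), N i with hM
  have hqN : ∀ i, q ∈ A i → q ∈ N i := by
    intro i hi
    refine ⟨τ i, ?_, (hτ i hi).2⟩
    constructor <;> [linarith [hη0 i]; linarith [hη0 i]]
  refine ⟨M, ?_, ?_, ?_⟩
  · -- preconnected
    have : M = ⋃₀ ((fun i => N i) '' {i | q ∈ A i}) := by
      rw [Set.sUnion_image]; rfl
    rw [this]
    apply isPreconnected_sUnion q
    · rintro t ⟨i, hi, rfl⟩; exact hqN i hi
    · rintro t ⟨i, hi, rfl⟩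
      exact isPreconnected_Icc.image _ (hfc i).continuousOn
  · -- inside the ball
    rintro x hx
    simp only [hM, mem_iUnion] at hx
    obtain ⟨i, hi, hxN⟩ := hx
    obtain ⟨r, hr, rfl⟩ := hxN
    have hrd : dist r (τ i) ≤ η i := by
      rw [Real.dist_eq, abs_le]
      constructor <;> [linarith [hr.1]; linarith [hr.2]]
    exact Metric.mem_ball.2 (hη i hi r hrd)
  · -- neighborhood
    set B : Fin n → Set Z := fun i => f i '' (Icc 0 1 ∩ {r | η i ≤ |r - τ i|}) with hB
    have hBclosed : ∀ i, IsClosed (B i) := by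
      intro i
      have : IsClosed {r : ℝ | η i ≤ |r - τ i|} :=
        isClosed_le continuous_const ((continuous_id.sub continuous_const).abs)
      exact ((isCompact_Icc.inter_right this).image (hfc i)).isClosed
    have hqB : ∀ i, q ∈ A i → q ∉ B i := by
      rintro i hi ⟨r, ⟨hr01, hrfar⟩, hfr⟩
      have hrτ := hfinj i r hr01 (τ i) (hτ i hi).1 (hfr.trans (hτ i hi).2.symm)
      have h' : η i ≤ |r - τ i| := hrfar
      rw [hrτ, sub_self, abs_zero] at h'
      linarith [hη0 i]
    have hδB' : ∀ i, ∃ δ : ℝ, 0 < δ ∧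
        (q ∈ A i → ∀ x ∈ Metric.ball q δ, x ∉ B i) := by
      intro i
      by_cases hq : q ∈ A i
      · have hmem : (B i)ᶜ ∈ 𝓝 q := (hBclosed i).isOpen_compl.mem_nhds (hqB i hq)
        obtain ⟨δ, hδ0, hδ⟩ := Metric.mem_nhds_iff.1 hmem
        exact ⟨δ, hδ0, fun _ x hx => hδ hx⟩
      · exact ⟨1, one_pos, fun h => absurd h hq⟩
    choose δB hδB0 hδB using hδB'
    set W : Set Z := ⋃ i ∈ {i : Fin n | q ∉ A i}, A i with hW
    have hWclosed : IsClosed W := by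
      apply Set.Finite.isClosed_biUnion (Set.toFinite _)
      intro i _
      have : IsCompact (A i) := by rw [← hfA i]; exact isCompact_Icc.image (hfc i)
      exact this.isClosed
    have hqW : q ∉ W := by
      rw [hW, mem_iUnion₂]
      rintro ⟨i, hi, hq⟩
      exact hi hq
    obtain ⟨δW, hδW0, hδW⟩ := Metric.mem_nhds_iff.1 (hWclosed.isOpen_compl.mem_nhds hqW)
    have hne : (Finset.univ : Finset (Fin n)).Nonempty := ⟨i₀, Finset.mem_univ _⟩
    set δf : ℝ := Finset.univ.inf' hne δB with hδf
    set δ : ℝ := min δW δf with hδ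
    have hδpos : 0 < δ :=
      lt_min hδW0 ((Finset.lt_inf'_iff hne).2 fun i _ => hδB0 i)
    rw [Metric.mem_nhds_iff]
    refine ⟨δ, hδpos, fun x hx => ?_⟩
    have hxU : x ∈ ⋃ i, A i := by rw [hcover]; exact mem_univ x
    obtain ⟨i, hxi⟩ := mem_iUnion.1 hxU
    have hqA : q ∈ A i := by
      by_contra h
      have hxW : x ∈ W := mem_iUnion₂.2 ⟨i, h, hxi⟩
      have : x ∈ Metric.ball q δW :=
        Metric.ball_subset_ball (min_le_left _ _) hx
      exact hδW this hxW
    rw [← hfA i] at hxi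
    obtain ⟨r, hr01, rfl⟩ := hxi
    have hclose : ¬ (η i ≤ |r - τ i|) := by
      intro hfar
      have hxB : f i r ∈ B i := ⟨r, ⟨hr01, hfar⟩, rfl⟩
      have : f i r ∈ Metric.ball q (δB i) :=
        Metric.ball_subset_ball ((min_le_right _ _).trans (Finset.inf'_le _ (Finset.mem_univ i)))
          hx
      exact hδB i hqA _ this hxB
    push_neg at hclose
    rw [abs_lt] at hclose
    refine mem_iUnion.2 ⟨i, mem_iUnion.2 ⟨hqA, r, ?_, rfl⟩⟩
    constructor <;> [linarith [hclose.1]; linarith [hclose.2]]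


/-! ### `Yt c` is not a finite graph -/

section NotGraph

variable [CompactSpace X] [ConnectedSpace X]

lemma not_finiteGraph_Yt {c z₁ : X} (hz₁c : z₁ ≠ c) : ¬ IsFiniteGraphSp (Yt c) := by
  intro hFG
  set w2 : Yt c := ⟨(c, 2), fiber_mem_sineC hz₁c ⟨by norm_num, le_refl _⟩⟩ with hw2
  obtain ⟨M, hMconn, hMball, hMnhds⟩ := finiteGraph_cik hFG w2 (ε := 1/2) (by norm_num)
  have hsndball : ∀ w' ∈ M, dist ((w' : X × ℝ).2) (2:ℝ) < 1/2 := by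
    intro w' hw'
    have h := Metric.mem_ball.1 (hMball hw')
    have hle : dist ((w' : X × ℝ).2) ((w2 : X × ℝ).2) ≤ dist w' w2 := by
      rw [Subtype.dist_eq, Prod.dist_eq]; exact le_max_right _ _
    exact lt_of_le_of_lt hle h
  -- Step A : M is contained in the fiber over c
  have hMfib : ∀ w ∈ M, pr c w = c := by
    intro w hwM
    by_contra hwc
    have hne : (w : X × ℝ).1 ≠ c := hwc
    set t0 : ℝ := dist ((w : X × ℝ).1) c with ht0
    have ht0pos : 0 < t0 := dist_pos.2 hne
    obtain ⟨n, hn⟩ := exists_nat_gt ((t0⁻¹ + 1) / (2 * Real.pi))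
    have h2pi : (0:ℝ) < 2 * Real.pi := by positivity
    have hbig : t0⁻¹ + 1 < n * (2 * Real.pi) := by rw [div_lt_iff₀ h2pi] at hn; linarith
    set a : ℝ := 3 * Real.pi / 2 + n * (2 * Real.pi) with ha
    have hapos : 0 < a := by
      have : (0:ℝ) < 3 * Real.pi / 2 := by positivity
      have ht0inv : 0 < t0⁻¹ := inv_pos.2 ht0pos
      rw [ha]; linarith
    set t : ℝ := a⁻¹ with htdef
    have htpos : 0 < t := inv_pos.2 hapos
    have htt0 : t < t0 := by
      rw [htdef, inv_lt_comm₀ hapos ht0pos]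
      have : (0:ℝ) < 3 * Real.pi / 2 := by positivity
      linarith
    -- at distance t from c, points of `Yt c` have second coordinate 0
    have hzero : ∀ w' : Yt c, dist (pr c w') c = t → (w' : X × ℝ).2 = 0 := by
      intro w' hw'
      have hne' : pr c w' ≠ c := by
        intro h; rw [h, dist_self] at hw'; exact absurd hw'.symm (ne_of_gt htpos)
      have hs := snd_eq_of_mem w'.2 hne'
      rw [hs, gfun]
      have hd : dist ((w' : X × ℝ).1) c = t := hw'
      rw [hd, htdef, inv_inv, ha]
      have hsin : Real.sin (3 * Real.pi / 2 + (n:ℝ) * (2 * Real.pi)) =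
          Real.sin (3 * Real.pi / 2) := Real.sin_add_nat_mul_two_pi _ n
      rw [hsin]
      have h32 : Real.sin (3 * Real.pi / 2) = -1 := by
        have h' : (3:ℝ) * Real.pi / 2 = Real.pi / 2 + Real.pi := by ring
        rw [h', Real.sin_add_pi, Real.sin_pi_div_two]
      rw [h32]; ring
    set u : Set (Yt c) := {w' | t < dist (pr c w') c} with hu
    set v : Set (Yt c) := {w' | dist (pr c w') c < t} with hv
    have huo : IsOpen u := isOpen_lt continuous_const ((continuous_pr c).dist continuous_const)
    have hvo : IsOpen v := isOpen_lt ((continuous_pr c).dist continuous_const) continuous_const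
    have hcov : M ⊆ u ∪ v := by
      intro w' hw'
      rcases lt_trichotomy (dist (pr c w') c) t with h | h | h
      · exact Or.inr h
      · exfalso
        have h0 := hzero w' h
        have h1 := hsndball w' hw'
        rw [h0, Real.dist_eq] at h1
        norm_num at h1
      · exact Or.inl h
    have hw2M : w2 ∈ M := mem_of_mem_nhds hMnhds
    have hw2v : w2 ∈ v := by
      show dist (pr c w2) c < t
      have : pr c w2 = c := rfl
      rw [this, dist_self]; exact htpos
    have hwu : w ∈ u := htt0
    obtain ⟨w'', -, h''u, h''v⟩ := hMconn u v huo hvo hcov ⟨w, hwM, hwu⟩ ⟨w2, hw2M, hw2v⟩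
    have hu'' : t < dist (pr c w'') c := h''u
    have hv'' : dist (pr c w'') c < t := h''v
    exact absurd (lt_trans hu'' hv'') (lt_irrefl _)
  -- Step B : but every neighborhood of w2 contains points off the fiber
  obtain ⟨δ, hδ0, hδ⟩ := Metric.mem_nhds_iff.1 hMnhds
  have hcl : (w2 : X × ℝ) ∈ closure (graphSet c) := w2.2
  rw [Metric.mem_closure_iff] at hcl
  obtain ⟨w', hw'G, hw'd⟩ := hcl δ hδ0
  set wy : Yt c := ⟨w', subset_closure hw'G⟩ with hwy
  have hwyM : wy ∈ M := by
    apply hδ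
    rw [Metric.mem_ball, Subtype.dist_eq, dist_comm]
    exact hw'd
  exact hw'G.1 (hMfib wy hwyM)

lemma isContinuumSp_Yt {c z₁ : X} (hz₁c : z₁ ≠ c) : IsContinuumSp (Yt c) :=
  ⟨⟨⟨(c, 0), fiber_mem_sineC hz₁c ⟨le_refl _, by norm_num⟩⟩⟩, compactSpace_Yt c,
    Subtype.connectedSpace (isConnected_sineC hz₁c)⟩

end NotGraph

end SineTrick

theorem finiteGraph_not_unique_hyperspace_in_continua (X : Type u) [MetricSpace X]
    (hX : IsFiniteGraphSp X) (p : X) :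
    ∃ (Y : Type u) (_ : MetricSpace Y) (y : Y), IsContinuumSp Y ∧
      ¬ IsFiniteGraphSp Y ∧ Nonempty (Cp X p ≃ₜ Cp Y y) := by
  obtain ⟨⟨hne, hcomp, hconn⟩, hgraph⟩ := hX
  haveI := hcomp; haveI := hconn
  obtain ⟨-, n, A, e, harc, hcover, -⟩ := hgraph
  have hpU : p ∈ ⋃ i, A i := by rw [hcover]; exact Set.mem_univ p
  obtain ⟨i₀, hi₀⟩ := Set.mem_iUnion.1 hpU
  obtain ⟨φ, -, -⟩ := harc i₀
  have h01 : (φ 0 : X) ≠ (φ 1 : X) := by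
    intro h
    have h2 := φ.injective (Subtype.coe_injective h)
    have h3 := congrArg Subtype.val h2
    simp at h3
  have hc : ∃ c : X, c ≠ p := by
    by_cases hp0 : (φ 0 : X) = p
    · exact ⟨(φ 1 : X), fun h => h01 (by rw [hp0, h])⟩
    · exact ⟨(φ 0 : X), hp0⟩
  obtain ⟨c, hcp⟩ := hc
  have hpc : p ≠ c := hcp.symm
  exact ⟨SineTrick.Yt c, inferInstance, SineTrick.basept hpc, SineTrick.isContinuumSp_Yt hpc,
    SineTrick.not_finiteGraph_Yt hpc, ⟨SineTrick.hyperHomeo hpc⟩⟩
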